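/- In the algebra of formal series in δ⁻¹ over Δ-smooth functions on a regular time scale, δ⁻¹·f = Σ_{k=0}^{∞} (−1)^k ((E⁻¹Δ)^k E⁻¹)(f) · δ^{−k−1}, where E⁻¹ is the backward shift. -/

import Mathlib

private lemma delta_pull (A : Type*) [CommRing A] (Δ : A →+ A) (k : ℕ) (x : A) :
    Δ ((-1 : A) ^ k * x) = (-1 : A) ^ k * Δ x := by
  rcases Nat.even_or_odd k with h | h
  · rw [h.neg_one_pow, one_mul, one_mul]
  · rw [h.neg_one_pow, neg_one_mul, neg_one_mul, map_neg]

/-- Leibniz rule for `δ⁻¹`: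
`δ⁻¹·f = Σ_{k≥0} (−1)^k ((E⁻¹Δ)^k E⁻¹)(f) δ^{−k−1}`.
The setting is abstracted: `A` is the commutative ring of Δ-smooth functions on
a regular time scale, `E` the (invertible) shift and `Δ` the delta derivative.
A formal series `X = Σ_{k≥0} c_k δ^{−k−1}` satisfies `δX = f` (i.e. `X = δ⁻¹f`
as formal series) iff, comparing coefficients using `δc = Δc + E(c)δ`,
`E(c₀) = f` and `Δ(c_k) + E(c_{k+1}) = 0` for all `k`.  The theorem states that
the coefficients `c_k = (−1)^k ((E⁻¹Δ)^k E⁻¹)(f)` satisfy this system and are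
the unique such coefficients. -/
theorem delta_inv_leibniz (A : Type*) [CommRing A] (E : A ≃+* A) (Δ : A →+ A) (f : A) :
    (E ((fun k : ℕ => (-1 : A) ^ k * (fun a => E.symm (Δ a))^[k] (E.symm f)) 0) = f ∧
      ∀ k : ℕ,
        Δ ((fun k : ℕ => (-1 : A) ^ k * (fun a => E.symm (Δ a))^[k] (E.symm f)) k) +
          E ((fun k : ℕ => (-1 : A) ^ k * (fun a => E.symm (Δ a))^[k] (E.symm f)) (k + 1)) = 0) ∧
    ∀ d : ℕ → A, (E (d 0) = f ∧ ∀ k : ℕ, Δ (d k) + E (d (k + 1)) = 0) →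
      ∀ k : ℕ, d k = (-1 : A) ^ k * (fun a => E.symm (Δ a))^[k] (E.symm f) := by
  set g : A → A := fun a => E.symm (Δ a) with hg
  refine ⟨⟨by simp, fun k => ?_⟩, fun d ⟨h0, hrec⟩ => ?_⟩
  · simp only [Function.iterate_succ_apply', hg]
    rw [delta_pull, map_mul, map_pow, map_neg, map_one, RingEquiv.apply_symm_apply,
      pow_succ]
    ring
  · intro k
    induction k with
    | zero =>
      simp only [pow_zero, one_mul, Function.iterate_zero, id]
      rw [← h0, E.symm_apply_apply]
    | succ k ih =>
      have h := hrec k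
      rw [ih] at h
      have hE : E (d (k + 1)) = -((-1 : A) ^ k * Δ (g^[k] (E.symm f))) := by
        rw [← delta_pull]; linear_combination h
      have hd : d (k+1) = E.symm (-((-1 : A) ^ k * Δ (g^[k] (E.symm f)))) := by
        rw [← hE, E.symm_apply_apply]
      simp only [Function.iterate_succ_apply', hg, pow_succ]
      rw [hd]
      rcases Nat.even_or_odd k with he | ho
      · rw [he.neg_one_pow]; simp [hg]
      · rw [ho.neg_one_pow]; simp [hg]
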